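/- Fix real numbers γ > 0 and P ∈ (0,1). Then lim_{m→∞} m · [ (1 − (1−P)/(1 + γ − γ·(1−P)^{1/m})) − P ] = −γ·(1−P)·ln(1−P). -/

import Mathlib

open Filter

lemma exp_slope_tendsto : Tendsto (fun x : ℝ => (Real.exp x - 1) / x) (nhdsWithin 0 {x | x ≠ 0}) (nhds 1) := by
  have h := Real.hasDerivAt_exp 0
  rw [hasDerivAt_iff_tendsto_slope] at h
  have heq : ∀ x : ℝ, slope Real.exp 0 x = (Real.exp x - 1) / x := by
    intro x; rw [slope_def_field]; simp
  have : {x : ℝ | x ≠ 0} = ({0}ᶜ : Set ℝ) := by ext x; simp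
  rw [this]
  rw [Real.exp_zero] at h
  exact h.congr heq

/-- First-order expansion of the `n = 1`, `p = m` detection probability:
`m·[(1 − (1−P)/(1 + γ − γ(1−P)^{1/m})) − P] → −γ(1−P)ln(1−P)` as `m → ∞`. -/
theorem detection_probability_expansion (γ P : ℝ) (hγ : 0 < γ) (hP : P ∈ Set.Ioo (0 : ℝ) 1) :
    Tendsto
      (fun m : ℕ =>
        (m : ℝ) * ((1 - (1 - P) / (1 + γ - γ * (1 - P) ^ (1 / (m : ℝ)))) - P))
      atTop (nhds (-γ * (1 - P) * Real.log (1 - P))) := by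
  obtain ⟨hP0, hP1⟩ := hP
  set q : ℝ := 1 - P with hq
  have hq0 : 0 < q := by simp [hq]; linarith
  have hq1 : q < 1 := by simp [hq]; linarith
  set c : ℝ := Real.log q with hc
  have hcneg : c < 0 := Real.log_neg hq0 hq1
  have hcne : c ≠ 0 := ne_of_lt hcneg
  -- e m := exp (c / m)
  have hto0 : Tendsto (fun m : ℕ => c / (m : ℝ)) atTop (nhdsWithin 0 {x | x ≠ 0}) := by
    apply tendsto_nhdsWithin_of_tendsto_nhds_of_eventually_within
    · exact tendsto_const_div_atTop_nhds_zero_nat c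
    · filter_upwards [eventually_ge_atTop 1] with m hm
      have hm0 : (0:ℝ) < m := by exact_mod_cast hm
      exact div_ne_zero hcne (ne_of_gt hm0)
  have hslope : Tendsto (fun m : ℕ => (Real.exp (c / m) - 1) / (c / m)) atTop (nhds 1) :=
    exp_slope_tendsto.comp hto0
  -- main numerator limit: m * (1 - exp(c/m)) → -c
  have hnum : Tendsto (fun m : ℕ => (m : ℝ) * (1 - Real.exp (c / m))) atTop (nhds (-c)) := by
    have := hslope.const_mul (-c)
    rw [mul_one] at this
    apply this.congr'
    filter_upwards [eventually_ge_atTop 1] with m hm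
    have hm0 : (m:ℝ) ≠ 0 := by positivity
    field_simp
    ring
  -- exp(c/m) ≤ 1
  have hexp_le : ∀ m : ℕ, Real.exp (c / (m:ℝ)) ≤ 1 := by
    intro m
    rcases Nat.eq_zero_or_pos m with h | h
    · simp [h]
    · have h0 : c / (m:ℝ) ≤ 0 :=
        div_nonpos_of_nonpos_of_nonneg (le_of_lt hcneg) (by positivity)
      calc Real.exp (c / (m:ℝ)) ≤ Real.exp 0 := Real.exp_le_exp.2 h0
        _ = 1 := Real.exp_zero
  have hDpos : ∀ m : ℕ, (0:ℝ) < 1 + γ * (1 - Real.exp (c / m)) := by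
    intro m
    have h1 : 0 ≤ γ * (1 - Real.exp (c / m)) :=
      mul_nonneg hγ.le (by linarith [hexp_le m])
    linarith
  -- denominator limit
  have hden : Tendsto (fun m : ℕ => 1 + γ * (1 - Real.exp (c / m))) atTop (nhds 1) := by
    have h1 : Tendsto (fun m : ℕ => Real.exp (c / m)) atTop (nhds 1) := by
      have := (Real.continuous_exp.tendsto 0).comp
        ((tendsto_const_div_atTop_nhds_zero_nat c))
      rw [Real.exp_zero] at this; exact this
    have : Tendsto (fun m : ℕ => 1 + γ * (1 - Real.exp (c / m))) atTop
        (nhds (1 + γ * (1 - 1))) := by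
      exact (tendsto_const_nhds.add ((tendsto_const_nhds.sub h1).const_mul γ))
    simpa using this
  -- the combined limit
  have hmain : Tendsto
      (fun m : ℕ => γ * q * ((m : ℝ) * (1 - Real.exp (c / m))) / (1 + γ * (1 - Real.exp (c / m))))
      atTop (nhds (-γ * q * c)) := by
    have h := ((hnum.const_mul (γ * q)).div hden one_ne_zero)
    have : γ * q * -c / 1 = -γ * q * c := by ring
    rw [this] at h
    exact h
  apply hmain.congr'
  filter_upwards [eventually_ge_atTop 1] with m hm
  have hm0 : (m:ℝ) ≠ 0 := by positivity
  have hrpow : q ^ (1 / (m:ℝ)) = Real.exp (c / m) := by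
    rw [Real.rpow_def_of_pos hq0, hc]
    ring_nf
  have hD := hDpos m
  have hDne : (1 : ℝ) + γ * (1 - Real.exp (c / m)) ≠ 0 := ne_of_gt hD
  have hP' : P = 1 - q := by simp [hq]
  show _ = (m:ℝ) * ((1 - q / (1 + γ - γ * q ^ (1 / (m:ℝ)))) - P)
  rw [hrpow, hP']
  have hD2 : (1:ℝ) + γ - γ * Real.exp (c / m) ≠ 0 := by
    have : (1:ℝ) + γ - γ * Real.exp (c / m) = 1 + γ * (1 - Real.exp (c / m)) := by ring
    rw [this]; exact hDne
  field_simp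
  ring
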